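/- Let λ > 1 and α ∈ (0,1). Then the series S(λ) := ∑_{k=0}^∞ (k+1)^α λ^{−k} converges, and the function F(λ) := 2λ + (λ−1)·S(λ) − λ² is continuous and has a unique zero λ* on (1, ∞). -/
import Mathlib

open Real Set

private lemma zpow_rw {lam : ℝ} (k : ℕ) : lam ^ (-(k:ℤ)) = (lam⁻¹)^k := by
  rw [zpow_neg, zpow_natCast, inv_pow]

private lemma term_nonneg (α : ℝ) {lam : ℝ} (h : 0 < lam) (k : ℕ) :
    0 ≤ ((k:ℝ)+1)^α * lam ^ (-(k:ℤ)) := by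
  rw [zpow_rw]; positivity

private lemma term_le (α : ℝ) (hα1 : α ≤ 1) {lam b : ℝ} (hb : 0 < b) (hlam : b ≤ lam) (k : ℕ) :
    ((k:ℝ)+1)^α * lam ^ (-(k:ℤ)) ≤ ((k:ℝ)+1) * b⁻¹^k := by
  rw [zpow_rw]
  have hk1 : (1:ℝ) ≤ (k:ℝ)+1 := by have := Nat.cast_nonneg (α:=ℝ) k; linarith
  have h1 : ((k:ℝ)+1)^α ≤ ((k:ℝ)+1) := by
    calc ((k:ℝ)+1)^α ≤ ((k:ℝ)+1)^(1:ℝ) := Real.rpow_le_rpow_of_exponent_le hk1 hα1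
    _ = (k:ℝ)+1 := Real.rpow_one _
  have hlam0 : 0 < lam := lt_of_lt_of_le hb hlam
  have h2 : (lam⁻¹:ℝ)^k ≤ b⁻¹^k := by
    apply pow_le_pow_left₀ (by positivity)
    exact inv_anti₀ hb hlam
  calc ((k:ℝ)+1)^α * lam⁻¹^k ≤ ((k:ℝ)+1)^α * b⁻¹^k :=
        mul_le_mul_of_nonneg_left h2 (by positivity)
    _ ≤ ((k:ℝ)+1) * b⁻¹^k := mul_le_mul_of_nonneg_right h1 (by positivity)

private lemma summable_maj {b : ℝ} (hb : 1 < b) : Summable fun k : ℕ => ((k:ℝ)+1) * b⁻¹^k := by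
  have hr : ‖(b⁻¹ : ℝ)‖ < 1 := by
    rw [Real.norm_eq_abs, abs_of_nonneg (by positivity), inv_lt_one_iff₀]; right; exact hb
  have h1 := summable_pow_mul_geometric_of_norm_lt_one 1 hr
  have h2 : Summable fun k : ℕ => (b⁻¹:ℝ)^k := summable_geometric_of_norm_lt_one hr
  refine (h1.add h2).congr fun k => ?_
  simp; ring

private lemma summable_aux (α : ℝ) (hα1 : α ≤ 1) {lam : ℝ} (h : 1 < lam) :
    Summable fun k : ℕ => ((k:ℝ)+1)^α * lam ^ (-(k:ℤ)) :=
  Summable.of_nonneg_of_le (term_nonneg α (by linarith)) (term_le α hα1 (by linarith) le_rfl)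
    (summable_maj h)

private lemma S_antitone (α : ℝ) (hα1 : α ≤ 1) {x y : ℝ} (hx : 1 < x) (hxy : x ≤ y) :
    (∑' k : ℕ, ((k:ℝ)+1)^α * y ^ (-(k:ℤ))) ≤ ∑' k : ℕ, ((k:ℝ)+1)^α * x ^ (-(k:ℤ)) := by
  refine Summable.tsum_le_tsum (fun k => ?_) (summable_aux α hα1 (lt_of_lt_of_le hx hxy))
    (summable_aux α hα1 hx)
  have hy0 : (0:ℝ) < y := by linarith
  rw [zpow_rw, zpow_rw]
  exact mul_le_mul_of_nonneg_left
    (pow_le_pow_left₀ (by positivity) (inv_anti₀ (by linarith) hxy) k) (by positivity)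

private lemma S_nonneg (α : ℝ) {lam : ℝ} (h : 1 < lam) :
    0 ≤ ∑' k : ℕ, ((k:ℝ)+1)^α * lam ^ (-(k:ℤ)) :=
  tsum_nonneg (term_nonneg α (by linarith))

private lemma S_le_four (α : ℝ) (hα1 : α ≤ 1) {lam : ℝ} (h : 2 ≤ lam) :
    (∑' k : ℕ, ((k:ℝ)+1)^α * lam ^ (-(k:ℤ))) ≤ 4 := by
  have h2 : (1:ℝ) < 2 := one_lt_two
  have hs : HasSum (fun k : ℕ => ((k:ℝ)+1) * (2:ℝ)⁻¹^k) 4 := by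
    have hr : ‖((2:ℝ)⁻¹ : ℝ)‖ < 1 := by rw [Real.norm_eq_abs]; rw [abs_of_nonneg] <;> norm_num
    have h1 : HasSum (fun n : ℕ => (n:ℝ) * (2:ℝ)⁻¹^n) ((2:ℝ)⁻¹ / (1 - (2:ℝ)⁻¹)^2) :=
      hasSum_coe_mul_geometric_of_norm_lt_one hr
    have hg : HasSum (fun n : ℕ => ((2:ℝ)⁻¹)^n) (1 - (2:ℝ)⁻¹)⁻¹ :=
      hasSum_geometric_of_lt_one (by norm_num) (by norm_num)
    have := h1.add hg
    convert this using 2 with k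
    · ring
    · norm_num
  calc (∑' k : ℕ, ((k:ℝ)+1)^α * lam ^ (-(k:ℤ)))
      ≤ ∑' k : ℕ, ((k:ℝ)+1) * (2:ℝ)⁻¹^k :=
        Summable.tsum_le_tsum (term_le α hα1 (by norm_num) h) (summable_aux α hα1 (by linarith))
          hs.summable
    _ = 4 := hs.tsum_eq

theorem stmt11 (α : ℝ) (hα : α ∈ Set.Ioo (0:ℝ) 1) :
    (∀ lam : ℝ, 1 < lam → Summable fun k : ℕ => ((k : ℝ) + 1) ^ α * lam ^ (-(k : ℤ))) ∧
    ContinuousOn (fun lam : ℝ =>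
      2 * lam + (lam - 1) * (∑' k : ℕ, ((k : ℝ) + 1) ^ α * lam ^ (-(k : ℤ))) - lam ^ 2)
      (Set.Ioi 1) ∧
    ∃! lam : ℝ, lam ∈ Set.Ioi (1:ℝ) ∧
      2 * lam + (lam - 1) * (∑' k : ℕ, ((k : ℝ) + 1) ^ α * lam ^ (-(k : ℤ))) - lam ^ 2 = 0 := by
  obtain ⟨hα0, hα1⟩ := hα
  have hα1' : α ≤ 1 := le_of_lt hα1
  set S : ℝ → ℝ := fun lam => ∑' k : ℕ, ((k:ℝ)+1)^α * lam ^ (-(k:ℤ)) with hS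
  set F : ℝ → ℝ := fun lam => 2 * lam + (lam - 1) * S lam - lam ^ 2 with hF
  -- Continuity
  have hcont : ContinuousOn F (Set.Ioi 1) := by
    intro x hx
    simp only [Set.mem_Ioi] at hx
    set a : ℝ := (1 + x) / 2 with ha
    have ha1 : 1 < a := by rw [ha]; linarith
    have hxa : x ∈ Set.Ioi a := by rw [Set.mem_Ioi, ha]; linarith
    have hScont : ContinuousOn S (Set.Ioi a) := by
      refine continuousOn_tsum (f := fun (k : ℕ) (lam : ℝ) => ((k:ℝ)+1)^α * lam ^ (-(k:ℤ)))
        (u := fun (k : ℕ) => ((k:ℝ)+1) * a⁻¹^k) (fun k => ?_) (summable_maj ha1) (fun k y hy => ?_)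
      · exact continuousOn_const.mul ((continuousOn_zpow₀ _).mono
          (fun y hy => by simp only [Set.mem_compl_iff, Set.mem_singleton_iff]
                          have : (1:ℝ) < y := lt_trans ha1 hy
                          intro h; simp [h] at this; linarith))
      · have hy' : a ≤ y := le_of_lt hy
        rw [Real.norm_eq_abs, abs_of_nonneg (term_nonneg α (by linarith [lt_of_lt_of_le ha1 hy']) k)]
        exact term_le α hα1' (by linarith) hy' k
    have hFcont : ContinuousOn F (Set.Ioi a) := by
      refine ContinuousOn.sub (ContinuousOn.add (continuousOn_const.mul continuousOn_id)
        (ContinuousOn.mul (ContinuousOn.sub continuousOn_id continuousOn_const) hScont)) ?_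
      exact (continuousOn_id.pow 2)
    exact (hFcont.continuousAt (isOpen_Ioi.mem_nhds hxa)).continuousWithinAt
  refine ⟨fun lam h => summable_aux α hα1' h, hcont, ?_⟩
  -- Existence via IVT on [3/2, 6]
  have hF32 : 0 < F (3/2) := by
    have := S_nonneg α (show (1:ℝ) < 3/2 by norm_num)
    simp only [hF]
    nlinarith
  have hF6 : F 6 < 0 := by
    have h4 := S_le_four α hα1' (show (2:ℝ) ≤ 6 by norm_num)
    have h0 := S_nonneg α (show (1:ℝ) < 6 by norm_num)
    simp only [hF]
    nlinarith
  have hsub : Set.Icc (3/2 : ℝ) 6 ⊆ Set.Ioi 1 := fun y hy => by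
    simp only [Set.mem_Icc] at hy; simp only [Set.mem_Ioi]; linarith [hy.1]
  have hivt := intermediate_value_Icc' (show (3/2:ℝ) ≤ 6 by norm_num) (hcont.mono hsub)
  have h0mem : (0:ℝ) ∈ Set.Icc (F 6) (F (3/2)) := ⟨le_of_lt hF6, le_of_lt hF32⟩
  obtain ⟨c, hc, hFc⟩ := hivt h0mem
  -- Uniqueness
  have key : ∀ z : ℝ, 1 < z → F z = 0 → S z = (z - 1) - 1/(z-1) := by
    intro z hz hFz
    have hz1 : z - 1 ≠ 0 := by intro h; linarith [sub_eq_zero.mp h]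
    simp only [hF] at hFz
    field_simp
    nlinarith [hFz]
  have uniq : ∀ y z : ℝ, 1 < y → 1 < z → F y = 0 → F z = 0 → y = z := by
    intro y z hy hz hFy hFz
    by_contra hne
    wlog hlt : y < z generalizing y z
    · exact this z y hz hy hFz hFy (Ne.symm hne) (lt_of_le_of_ne (not_lt.mp hlt) (Ne.symm hne))
    have hSy := key y hy hFy
    have hSz := key z hz hFz
    have hanti : S z ≤ S y := S_antitone α hα1' hy (le_of_lt hlt)
    have hinv : 1/(z-1) < 1/(y-1) := by
      apply one_div_lt_one_div_of_lt (by linarith) (by linarith)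
    rw [hSy, hSz] at hanti
    linarith
  refine ⟨c, ⟨hsub hc, hFc⟩, ?_⟩
  rintro y ⟨hy, hFy⟩
  exact uniq y c (Set.mem_Ioi.mp hy) (Set.mem_Ioi.mp (hsub hc)) hFy hFc
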